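/- arXiv:2211.03996 — 2 statements merged into one kernel-verified Lean document; each statement's English description precedes it below -/
import Mathlib

section
/- (Differentiation formula for derivations, formula (1.1) of the paper.) Let D : A → A be a continuous ℂ-linear map satisfying the Leibniz rule D(a·b) = D(a)·b + a·D(b) for all a, b ∈ A. Then for every x ∈ A: D(exp(x)) = ∫₀¹ exp(s·x)·D(x)·exp((1−s)·x) ds. -/
open MeasureTheory

/-- **Differentiation formula for derivations, formula (1.1) of the paper.**
`A` is a unital complex Banach algebra, `exp` is the exponential series
`exp(x) = Σ_{n≥0} xⁿ/n!`, and the integral is a Bochner integral over `s ∈ [0,1]`.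
Let `D : A → A` be a continuous ℂ-linear map satisfying the Leibniz rule
`D(a·b) = D(a)·b + a·D(b)` for all `a, b ∈ A`.  Then for every `x ∈ A`:
`D(exp(x)) = ∫₀¹ exp(s·x)·D(x)·exp((1−s)·x) ds`. -/
theorem derivation_differentiation_formula
    {A : Type*} [NormedRing A] [NormedAlgebra ℂ A] [CompleteSpace A]
    (D : A →L[ℂ] A) (hD : ∀ a b : A, D (a * b) = D a * b + a * D b) (x : A) :
    D (NormedSpace.exp x) =
      ∫ s in Set.Icc (0 : ℝ) 1,
        NormedSpace.exp (s • x) * D x * NormedSpace.exp ((1 - s) • x) := by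
  have hD1 : D 1 = 0 := by
    have h := hD 1 1
    simp only [mul_one, one_mul] at h
    exact (left_eq_add.mp h)
  set g : ℝ → A := fun s =>
    NormedSpace.exp (s • x) * D x * NormedSpace.exp ((1 - s) • x) with hg
  set f : ℝ → A := fun s =>
    NormedSpace.exp (s • x) * D (NormedSpace.exp ((1 - s) • x)) with hf
  have key : ∀ s : ℝ, HasDerivAt f (-(g s)) s := by
    intro s
    have h1 : HasDerivAt (fun u : ℝ => NormedSpace.exp (u • x))
        (NormedSpace.exp (s • x) * x) s := by
      simpa using hasDerivAt_exp_smul_const (𝕂 := ℝ) x s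
    have h2 : HasDerivAt (fun u : ℝ => NormedSpace.exp ((1 - u) • x))
        (-(x * NormedSpace.exp ((1 - s) • x))) s := by
      have hin : HasDerivAt (fun u : ℝ => (1 - u)) (-1 : ℝ) s := by
        simpa using (hasDerivAt_id s).const_sub 1
      have h := HasDerivAt.scomp (𝕜 := ℝ) s
        (hasDerivAt_exp_smul_const' (𝕂 := ℝ) x (1 - s)) hin
      simpa [Function.comp_def] using h
    have h3 : HasDerivAt (fun u : ℝ => D (NormedSpace.exp ((1 - u) • x)))
        (D (-(x * NormedSpace.exp ((1 - s) • x)))) s :=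
      (D.restrictScalars ℝ).hasFDerivAt.comp_hasDerivAt s h2
    have h4 := h1.mul h3
    convert h4 using 1
    · rfl
    rw [map_neg, hD]
    set e := NormedSpace.exp ((1 - s) • x)
    set E := NormedSpace.exp (s • x)
    rw [mul_neg, mul_add]
    rw [show E * x * D e = E * (x * D e) by rw [mul_assoc]]
    rw [show E * (D x * e) = E * D x * e by rw [mul_assoc]]
    abel
  have hgc : Continuous g := by
    let +nondep : NormedAlgebra ℚ A := .restrictScalars ℚ ℂ A
    have he : Continuous fun s : ℝ => NormedSpace.exp (s • x) :=
      NormedSpace.exp_continuous.comp (continuous_id.smul continuous_const)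
    have he' : Continuous fun s : ℝ => NormedSpace.exp ((1 - s) • x) :=
      NormedSpace.exp_continuous.comp ((continuous_const.sub continuous_id).smul continuous_const)
    exact (he.mul continuous_const).mul he'
  have hFTC : (∫ s in (0:ℝ)..1, -(g s)) = f 1 - f 0 :=
    intervalIntegral.integral_eq_sub_of_hasDerivAt (fun s _ => key s)
      (hgc.neg.intervalIntegrable 0 1)
  have hf1 : f 1 = 0 := by simp [hf, hD1]
  have hf0 : f 0 = D (NormedSpace.exp x) := by simp [hf]
  rw [hf1, hf0, zero_sub, intervalIntegral.integral_neg, neg_inj] at hFTC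
  rw [← hFTC, intervalIntegral.integral_of_le zero_le_one,
    MeasureTheory.integral_Icc_eq_integral_Ioc]
end

section
/- (Duhamel perturbation series.) For all x, y ∈ A, the family (Iₙ)_{n≥0} has sum exp(x+y) (the series Σ_{n≥0} Iₙ converges in A to exp(x+y)), where I₀ = exp(x) and, for n ≥ 1, Iₙ = ∫_{Δₙ} exp((1−(s₁+⋯+sₙ))·x)·y·exp(s₁·x)·y·exp(s₂·x)⋯y·exp(sₙ·x) ds₁⋯dsₙ, the integral being over the standard simplex Δₙ = {(s₁,…,sₙ) ∈ ℝⁿ : sᵢ ≥ 0 for all i, s₁+⋯+sₙ ≤ 1}. -/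
open MeasureTheory

/-- The `n`-th Duhamel term `Iₙ`: `I₀ = exp(x)` and, for `n ≥ 1`,
`Iₙ = ∫_{Δₙ} exp((1−(s₁+⋯+sₙ))·x)·y·exp(s₁·x)·y·exp(s₂·x)⋯y·exp(sₙ·x) ds₁⋯dsₙ`,
a Bochner integral over the standard simplex
`Δₙ = {(s₁,…,sₙ) ∈ ℝⁿ : sᵢ ≥ 0 for all i, s₁+⋯+sₙ ≤ 1}` with Lebesgue measure. -/
noncomputable def duhamelTerm {A : Type*} [NormedRing A] [NormedAlgebra ℂ A]
    [CompleteSpace A] (x y : A) : ℕ → A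
  | 0 => NormedSpace.exp x
  | (n + 1) =>
    ∫ s in {s : Fin (n + 1) → ℝ | (∀ i, 0 ≤ s i) ∧ ∑ i, s i ≤ 1},
      NormedSpace.exp ((1 - ∑ i, s i) • x) *
        (List.ofFn fun i : Fin (n + 1) => y * NormedSpace.exp (s i • x)).prod

open MeasureTheory NormedSpace

namespace DuhamelAux

/-! ### The standard corner simplex -/

def Δ (n : ℕ) : Set (Fin n → ℝ) := {s | (∀ i, 0 ≤ s i) ∧ ∑ i, s i ≤ 1}

lemma isClosed_Δ (n : ℕ) : IsClosed (Δ n) := by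
  have h1 : IsClosed {s : Fin n → ℝ | ∀ i, 0 ≤ s i} := by
    have : {s : Fin n → ℝ | ∀ i, 0 ≤ s i} = ⋂ i, {s | 0 ≤ s i} := by
      ext s; simp [Set.mem_iInter]
    rw [this]
    exact isClosed_iInter fun i => isClosed_le continuous_const (continuous_apply i)
  have h2 : IsClosed {s : Fin n → ℝ | ∑ i, s i ≤ 1} :=
    isClosed_le (by continuity) continuous_const
  exact h1.inter h2

lemma mem_Icc_of_mem_Δ {n : ℕ} {s : Fin n → ℝ} (hs : s ∈ Δ n) (i : Fin n) :
    0 ≤ s i ∧ s i ≤ 1 := by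
  refine ⟨hs.1 i, le_trans ?_ hs.2⟩
  exact Finset.single_le_sum (fun j _ => hs.1 j) (Finset.mem_univ i)

lemma sum_nonneg_of_mem_Δ {n : ℕ} {s : Fin n → ℝ} (hs : s ∈ Δ n) :
    0 ≤ ∑ i, s i :=
  Finset.sum_nonneg fun i _ => hs.1 i

lemma isCompact_Δ (n : ℕ) : IsCompact (Δ n) := by
  refine IsCompact.of_isClosed_subset (isCompact_Icc (a := (0 : Fin n → ℝ)) (b := 1))
    (isClosed_Δ n) ?_
  intro s hs
  rw [Set.mem_Icc]
  constructor <;> intro i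
  · exact (mem_Icc_of_mem_Δ hs i).1
  · exact (mem_Icc_of_mem_Δ hs i).2

lemma measurableSet_Δ (n : ℕ) : MeasurableSet (Δ n) := (isClosed_Δ n).measurableSet

lemma Δ_zero_eq_univ : Δ 0 = Set.univ := by
  ext s
  simp [Δ]

lemma volume_univ_fin_zero : (volume : Measure (Fin 0 → ℝ)) Set.univ = 1 := by
  rw [volume_pi, Measure.pi_univ]
  simp

/-! ### Norm bound for the exponential -/

variable {A : Type*} [NormedRing A] [NormedAlgebra ℝ A] [CompleteSpace A]

lemma norm_exp_le (a : A) : ‖exp a‖ ≤ (‖(1:A)‖ + 1) * Real.exp ‖a‖ := by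
  rw [exp_eq_tsum ℝ]
  have hs : Summable fun n : ℕ => ((n.factorial : ℝ))⁻¹ • a ^ n := expSeries_summable' a
  have hb : ∀ n : ℕ, ‖((n.factorial : ℝ))⁻¹ • a ^ n‖ ≤
      (‖(1:A)‖ + 1) * (‖a‖ ^ n / n.factorial) := by
    intro n
    rw [norm_smul, norm_inv, Real.norm_natCast]
    rcases Nat.eq_zero_or_pos n with h | h
    · subst h
      simp only [Nat.factorial_zero, Nat.cast_one, inv_one, one_mul, pow_zero, div_one]
      nlinarith [norm_nonneg (1:A)]
    · have h1 : ‖a ^ n‖ ≤ ‖a‖ ^ n := norm_pow_le' a h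
      have h2 : (1:ℝ) ≤ ‖(1:A)‖ + 1 := by nlinarith [norm_nonneg (1:A)]
      have h3 : (0:ℝ) < (n.factorial : ℝ) := by positivity
      rw [div_eq_inv_mul, ← mul_assoc]
      calc ((n.factorial : ℝ))⁻¹ * ‖a ^ n‖ ≤ ((n.factorial : ℝ))⁻¹ * ‖a‖ ^ n := by
            exact mul_le_mul_of_nonneg_left h1 (by positivity)
        _ ≤ (‖(1:A)‖ + 1) * ((n.factorial : ℝ))⁻¹ * ‖a‖ ^ n := by
            have := mul_le_mul_of_nonneg_right
              (mul_le_mul_of_nonneg_right h2 (inv_nonneg.2 h3.le))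
              (pow_nonneg (norm_nonneg a) n)
            linarith [this]
  have hbs : Summable fun n : ℕ => (‖(1:A)‖ + 1) * (‖a‖ ^ n / n.factorial) :=
    (Real.summable_pow_div_factorial ‖a‖).mul_left _
  have hns : Summable fun n : ℕ => ‖((n.factorial : ℝ))⁻¹ • a ^ n‖ :=
    Summable.of_nonneg_of_le (fun n => norm_nonneg _) hb hbs
  calc ‖∑' n : ℕ, ((n.factorial : ℝ))⁻¹ • a ^ n‖ ≤ ∑' n : ℕ, ‖((n.factorial : ℝ))⁻¹ • a ^ n‖ :=
        norm_tsum_le_tsum_norm hns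
    _ ≤ ∑' n : ℕ, (‖(1:A)‖ + 1) * (‖a‖ ^ n / n.factorial) :=
        Summable.tsum_le_tsum hb hns hbs
    _ = (‖(1:A)‖ + 1) * Real.exp ‖a‖ := by
        rw [tsum_mul_left, Real.exp_eq_exp_ℝ, exp_eq_tsum_div]

lemma exp_cont : Continuous (exp : A → A) := by
  letI : NormedAlgebra ℚ A := NormedAlgebra.restrictScalars ℚ ℝ A
  exact exp_continuous

/-! ### One-variable Duhamel formula -/

lemma duhamel_one (x z w : A) {c : ℝ} (hc : 0 ≤ c) :
    exp (c • z) * w = exp (c • x) * w +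
      ∫ t in Set.Ioc 0 c, exp ((c - t) • z) * ((z - x) * (exp (t • x) * w)) := by
  set g : ℝ → A := fun t => exp ((c - t) • z) * (exp (t • x) * w) with hg
  set D : ℝ → A := fun t => exp ((c - t) • z) * ((x - z) * (exp (t • x) * w)) with hD
  have hderiv : ∀ t ∈ Set.uIcc 0 c, HasDerivAt g (D t) t := by
    intro t _
    have h0 : HasDerivAt (fun t : ℝ => c - t) (-1 : ℝ) t := by
      simpa using (hasDerivAt_id t).const_sub c
    have h1 : HasDerivAt (fun t : ℝ => exp ((c - t) • z))
        ((-1 : ℝ) • (exp ((c - t) • z) * z)) t :=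
      (hasDerivAt_exp_smul_const (𝕂 := ℝ) z (c - t)).scomp t h0
    have h2 : HasDerivAt (fun t : ℝ => exp (t • x) * w)
        ((exp (t • x) * x) * w) t :=
      (hasDerivAt_exp_smul_const (𝕂 := ℝ) x t).mul_const w
    have key := h1.mul h2
    have hxc : x * exp (t • x) = exp (t • x) * x :=
      (((Commute.refl x).smul_right t).exp_right).eq
    convert key using 1
    · rfl
    simp only [hD, neg_one_smul, neg_mul, sub_mul, mul_sub]
    rw [← mul_assoc x (exp (t • x)) w, hxc]
    simp only [mul_assoc]
    abel
  have hDcont : Continuous D := by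
    have h1 : Continuous fun t : ℝ => exp ((c - t) • z) :=
      exp_cont.comp ((continuous_const.sub continuous_id).smul continuous_const)
    have h2 : Continuous fun t : ℝ => exp (t • x) :=
      exp_cont.comp (continuous_id.smul continuous_const)
    exact h1.mul ((continuous_const.mul (h2.mul continuous_const)))
  have hftc := intervalIntegral.integral_eq_sub_of_hasDerivAt hderiv
    (hDcont.intervalIntegrable 0 c)
  have hgc : g c = exp (c • x) * w := by
    simp only [hg, sub_self, zero_smul, exp_zero, one_mul]
  have hg0 : g 0 = exp (c • z) * w := by
    simp only [hg, sub_zero, zero_smul, exp_zero, one_mul]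
  have hDneg : ∀ t, exp ((c - t) • z) * ((z - x) * (exp (t • x) * w)) = -(D t) := by
    intro t
    simp only [hD]
    rw [← neg_sub z x, neg_mul, mul_neg, neg_neg]
  rw [intervalIntegral.integral_of_le hc] at hftc
  calc exp (c • z) * w = g 0 := hg0.symm
    _ = g c - ∫ t in Set.Ioc 0 c, D t := by rw [hftc]; abel
    _ = exp (c • x) * w +
        ∫ t in Set.Ioc 0 c, exp ((c - t) • z) * ((z - x) * (exp (t • x) * w)) := by
      rw [hgc, sub_eq_add_neg, ← integral_neg]
      congr 1
      exact integral_congr_ae (Filter.Eventually.of_forall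
        fun t => by simp only []; rw [← hDneg t])

/-! ### Slicing the simplex integral -/

lemma slice {E : Type*} [NormedAddCommGroup E] [NormedSpace ℝ E] [CompleteSpace E]
    (n : ℕ) (g : (Fin (n + 1) → ℝ) → E) (hg : Continuous g) :
    ∫ u in Δ (n + 1), g u =
      ∫ s in Δ n, ∫ t in Set.Ioc 0 (1 - ∑ i, s i), g (Fin.cons t s) := by
  set e := MeasurableEquiv.piFinSuccAbove (fun _ : Fin (n + 1) => ℝ) 0 with he
  have hesymm : ∀ p : ℝ × (Fin n → ℝ), e.symm p = Fin.cons p.1 p.2 := by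
    intro p
    simp [he, MeasurableEquiv.piFinSuccAbove_symm_apply, Fin.insertNthEquiv,
      Fin.insertNth_zero]
  have mp : MeasurePreserving e.symm volume volume :=
    (volume_preserving_piFinSuccAbove (fun _ : Fin (n + 1) => ℝ) 0).symm
  set T : Set (ℝ × (Fin n → ℝ)) :=
    {p | 0 ≤ p.1 ∧ (∀ i, 0 ≤ p.2 i) ∧ p.1 + ∑ i, p.2 i ≤ 1} with hT
  have hpre : e.symm ⁻¹' Δ (n + 1) = T := by
    ext p
    simp only [Set.mem_preimage, hesymm, Δ, Set.mem_setOf_eq, hT, Fin.sum_cons]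
    constructor
    · rintro ⟨h1, h2⟩
      exact ⟨by simpa using h1 0, fun i => by simpa using h1 i.succ, h2⟩
    · rintro ⟨h1, h2, h3⟩
      refine ⟨fun i => ?_, h3⟩
      refine Fin.cases ?_ ?_ i
      · simpa using h1
      · intro j; simpa using h2 j
  set F : ℝ × (Fin n → ℝ) → E := fun p => g (Fin.cons p.1 p.2) with hF
  have hFcont : Continuous F := by
    apply hg.comp
    apply continuous_pi
    intro i
    refine Fin.cases ?_ ?_ i
    · simpa using continuous_fst
    · intro j
      simp only [Fin.cons_succ]; exact (continuous_apply j).comp continuous_snd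
  have hecont : Continuous (e : (Fin (n + 1) → ℝ) → ℝ × (Fin n → ℝ)) := by
    refine Continuous.prodMk (continuous_apply _) ?_
    exact continuous_pi fun j => continuous_apply _
  have hTcompact : IsCompact T := by
    have : T = (e : (Fin (n + 1) → ℝ) → ℝ × (Fin n → ℝ)) '' Δ (n + 1) := by
      rw [← hpre]
      exact (Equiv.image_eq_preimage_symm e.toEquiv.symm.symm (Δ (n + 1))).symm ▸ rfl
    rw [this]
    exact (isCompact_Δ (n + 1)).image hecont
  have hTmeas : MeasurableSet T := hTcompact.isClosed.measurableSet
  have hInt : IntegrableOn F T := hFcont.continuousOn.integrableOn_compact hTcompact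
  have step1 : ∫ u in Δ (n + 1), g u = ∫ p in T, F p := by
    rw [← hpre, ← mp.setIntegral_preimage_emb e.symm.measurableEmbedding]
    exact setIntegral_congr_fun (hpre ▸ hTmeas) fun p _ => by rw [hesymm]
  rw [step1, ← integral_indicator hTmeas, Measure.volume_eq_prod,
    integral_prod_symm _ ((integrable_indicator_iff hTmeas).2 hInt)]
  have key : ∀ s : Fin n → ℝ,
      (∫ t, T.indicator F (t, s)) =
        (Δ n).indicator (fun s => ∫ t in Set.Ioc 0 (1 - ∑ i, s i), g (Fin.cons t s)) s := by
    intro s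
    by_cases hs : s ∈ Δ n
    · rw [Set.indicator_of_mem hs]
      have : ∀ t : ℝ, T.indicator F (t, s) =
          (Set.Icc (0:ℝ) (1 - ∑ i, s i)).indicator (fun t => g (Fin.cons t s)) t := by
        intro t
        by_cases ht : t ∈ Set.Icc (0:ℝ) (1 - ∑ i, s i)
        · rw [Set.indicator_of_mem ht,
            Set.indicator_of_mem (show (t, s) ∈ T from ⟨ht.1, hs.1, by
              have := ht.2; linarith⟩)]
        · rw [Set.indicator_of_notMem ht, Set.indicator_of_notMem (fun hmem => ht ?_)]
          have h := hmem.2.2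
          simp only at h
          exact ⟨hmem.1, by linarith⟩
      simp_rw [this]
      rw [integral_indicator measurableSet_Icc, integral_Icc_eq_integral_Ioc]
    · rw [Set.indicator_of_notMem hs]
      have : ∀ t : ℝ, T.indicator F (t, s) = 0 := by
        intro t
        apply Set.indicator_of_notMem
        intro hmem
        exact hs ⟨hmem.2.1, by have := hmem.2.2; have := hmem.1; linarith⟩
      simp_rw [this, integral_zero]
  simp_rw [key]
  rw [integral_indicator (measurableSet_Δ n)]

/-! ### The main family of integrals -/

noncomputable def FF (z x y : A) (n : ℕ) : A :=
  ∫ s in Δ n, exp ((1 - ∑ i, s i) • z) *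
    (List.ofFn fun i : Fin n => y * exp (s i • x)).prod

lemma cont_integrand (z x y : A) (n : ℕ) :
    Continuous fun s : Fin n → ℝ => exp ((1 - ∑ i, s i) • z) *
      (List.ofFn fun i : Fin n => y * exp (s i • x)).prod := by
  have hsum : Continuous fun s : Fin n → ℝ => ∑ i, s i :=
    continuous_finset_sum _ fun i _ => continuous_apply i
  have hhead : Continuous fun s : Fin n → ℝ => exp ((1 - ∑ i, s i) • z) :=
    exp_cont.comp ((continuous_const.sub hsum).smul continuous_const)
  refine hhead.mul ?_
  simp_rw [List.ofFn_eq_map]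
  exact continuous_list_prod _ fun i _ =>
    continuous_const.mul (exp_cont.comp ((continuous_apply i).smul continuous_const))

lemma integrableOn_integrand (z x y : A) (n : ℕ) :
    IntegrableOn (fun s : Fin n → ℝ => exp ((1 - ∑ i, s i) • z) *
      (List.ofFn fun i : Fin n => y * exp (s i • x)).prod) (Δ n) :=
  (cont_integrand z x y n).continuousOn.integrableOn_compact (isCompact_Δ n)

lemma FF_zero (z x y : A) : FF z x y 0 = exp z := by
  rw [FF, Δ_zero_eq_univ]
  have : ∀ s : Fin 0 → ℝ, exp ((1 - ∑ i, s i) • z) *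
      (List.ofFn fun i : Fin 0 => y * exp (s i • x)).prod = exp z := by
    intro s
    simp [List.ofFn_zero]
  simp_rw [this]
  rw [setIntegral_const, measureReal_def, volume_univ_fin_zero]
  simp

lemma FF_step (x y : A) (n : ℕ) :
    FF (x + y) x y n = FF x x y n + FF (x + y) x y (n + 1) := by
  set z := x + y with hz
  have hyz : z - x = y := by rw [hz]; abel
  have key : FF z x y n - FF x x y n = FF z x y (n + 1) := by
    rw [FF, FF, FF, ← integral_sub (integrableOn_integrand z x y n)
      (integrableOn_integrand x x y n)]
    rw [slice n _ (cont_integrand z x y (n + 1))]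
    refine setIntegral_congr_fun (measurableSet_Δ n) fun s hs => ?_
    have hc : (0:ℝ) ≤ 1 - ∑ i, s i := by linarith [hs.2]
    set P := (List.ofFn fun i : Fin n => y * exp (s i • x)).prod with hP
    have hd := duhamel_one x z P hc
    have : exp ((1 - ∑ i, s i) • z) * P - exp ((1 - ∑ i, s i) • x) * P =
        ∫ t in Set.Ioc 0 (1 - ∑ i, s i),
          exp ((1 - ∑ i, s i - t) • z) * ((z - x) * (exp (t • x) * P)) := by
      rw [hd]; abel
    rw [this]
    refine integral_congr_ae (Filter.Eventually.of_forall fun t => ?_)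
    simp only [Fin.sum_cons, List.ofFn_succ, Fin.cons_zero, Fin.cons_succ, List.prod_cons,
      hyz]
    rw [show (1 : ℝ) - (t + ∑ i, s i) = 1 - ∑ i, s i - t by ring]
    rw [mul_assoc]
  rw [← key]; abel

/-! ### Volume of the simplex -/

lemma J_eq (n : ℕ) : ∀ k : ℕ, (∫ s in Δ n, (1 - ∑ i, s i) ^ k) =
    (k.factorial : ℝ) / ((n + k).factorial : ℝ) := by
  induction n with
  | zero =>
    intro k
    rw [Δ_zero_eq_univ]
    have : ∀ s : Fin 0 → ℝ, (1 - ∑ i, s i) ^ k = 1 := by intro s; simp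
    simp_rw [this]
    rw [setIntegral_const, measureReal_def, volume_univ_fin_zero]
    have : ((k.factorial : ℝ)) ≠ 0 := by positivity
    simp [div_self this]
  | succ n ih =>
    intro k
    have hcont : Continuous fun s : Fin (n + 1) → ℝ => (1 - ∑ i, s i) ^ k := by
      apply Continuous.pow
      exact continuous_const.sub (continuous_finset_sum _ fun i _ => continuous_apply i)
    rw [slice n _ hcont]
    have key : ∀ s ∈ Δ n, (∫ t in Set.Ioc 0 (1 - ∑ i, s i),
        (1 - ∑ i, Fin.cons t s i) ^ k) = (1 - ∑ i, s i) ^ (k + 1) / (k + 1) := by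
      intro s hs
      have hc : (0:ℝ) ≤ 1 - ∑ i, s i := by linarith [hs.2]
      set c := 1 - ∑ i, s i with hcdef
      have h1 : ∀ t : ℝ, (1 - ∑ i, Fin.cons t s i) ^ k = (c - t) ^ k := by
        intro t
        simp only [Fin.sum_cons]
        rw [show (1 : ℝ) - (t + ∑ i, s i) = c - t by rw [hcdef]; ring]
      simp_rw [h1]
      rw [← intervalIntegral.integral_of_le hc,
        intervalIntegral.integral_comp_sub_left (fun u => u ^ k) c]
      simp only [sub_self, sub_zero]
      rw [integral_pow]
      ring
    rw [setIntegral_congr_fun (measurableSet_Δ n) key]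
    have : (∫ s in Δ n, (1 - ∑ i, s i) ^ (k + 1) / (k + 1)) =
        (∫ s in Δ n, (1 - ∑ i, s i) ^ (k + 1)) / (k + 1) := integral_div _ _
    rw [this, ih (k + 1)]
    have hk : ((k + 1).factorial : ℝ) = (k + 1) * k.factorial := by
      rw [Nat.factorial_succ]; push_cast; ring
    have hnk : (n + 1 + k) = (n + (k + 1)) := by omega
    rw [hnk, hk]
    have h1 : (0:ℝ) < ((n + (k + 1)).factorial : ℝ) := by positivity
    have h2 : (0:ℝ) < (k:ℝ) + 1 := by positivity
    field_simp

lemma volume_Δ (n : ℕ) : (volume (Δ n)).toReal = 1 / (n.factorial : ℝ) := by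
  have h := J_eq n 0
  have : ∀ s : Fin n → ℝ, (1 - ∑ i, s i) ^ (0:ℕ) = (1:ℝ) := fun s => pow_zero _
  rw [setIntegral_congr_fun (measurableSet_Δ n) (fun s _ => this s)] at h
  rw [setIntegral_const, measureReal_def] at h
  simpa using h

/-! ### Norm bounds -/

lemma norm_mul_ofFn_prod_le : ∀ (n : ℕ) (a : A) (f : Fin n → A) (c C : ℝ),
    ‖a‖ ≤ C → (∀ i, ‖f i‖ ≤ c) → 0 ≤ c →
    ‖a * (List.ofFn f).prod‖ ≤ C * c ^ n := by
  intro n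
  induction n with
  | zero =>
    intro a f c C hC _ _
    simpa [List.ofFn_zero] using hC
  | succ n ih =>
    intro a f c C hC hc hc0
    have hC0 : 0 ≤ C := le_trans (norm_nonneg a) hC
    rw [List.ofFn_succ, List.prod_cons, ← mul_assoc]
    have h1 : ‖a * f 0‖ ≤ C * c :=
      le_trans (norm_mul_le _ _) (mul_le_mul hC (hc 0) (norm_nonneg _) hC0)
    have := ih (a * f 0) (fun i => f i.succ) c (C * c) h1 (fun i => hc i.succ) hc0
    calc ‖a * f 0 * (List.ofFn fun i => f i.succ).prod‖ ≤ C * c * c ^ n := this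
      _ = C * c ^ (n + 1) := by ring

lemma FF_norm_le (z x y : A) (n : ℕ) :
    ‖FF z x y n‖ ≤ ((‖(1:A)‖ + 1) * Real.exp ‖z‖) *
      (((‖(1:A)‖ + 1) * ‖y‖ * Real.exp ‖x‖) ^ n / (n.factorial : ℝ)) := by
  set M := ‖(1:A)‖ + 1 with hM
  have hM0 : (0:ℝ) < M := by rw [hM]; positivity
  set C := M * Real.exp ‖z‖ with hC
  set c := M * ‖y‖ * Real.exp ‖x‖ with hc
  have hc0 : 0 ≤ c := by rw [hc]; positivity
  have hbound : ∀ s ∈ Δ n, ‖exp ((1 - ∑ i, s i) • z) *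
      (List.ofFn fun i : Fin n => y * exp (s i • x)).prod‖ ≤ C * c ^ n := by
    intro s hs
    apply norm_mul_ofFn_prod_le n _ _ c C _ _ hc0
    · calc ‖exp ((1 - ∑ i, s i) • z)‖ ≤ M * Real.exp ‖(1 - ∑ i, s i) • z‖ :=
          norm_exp_le _
        _ ≤ C := by
          rw [hC]
          have h1 : ‖(1 - ∑ i, s i) • z‖ ≤ ‖z‖ := by
            rw [norm_smul, Real.norm_eq_abs,
              abs_of_nonneg (by linarith [hs.2] : (0:ℝ) ≤ 1 - ∑ i, s i)]
            have h2 : 1 - ∑ i, s i ≤ 1 := by linarith [sum_nonneg_of_mem_Δ hs]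
            nlinarith [norm_nonneg z]
          exact mul_le_mul_of_nonneg_left (Real.exp_le_exp.2 h1) hM0.le
    · intro i
      calc ‖y * exp (s i • x)‖ ≤ ‖y‖ * ‖exp (s i • x)‖ := norm_mul_le _ _
        _ ≤ ‖y‖ * (M * Real.exp ‖s i • x‖) :=
          mul_le_mul_of_nonneg_left (norm_exp_le _) (norm_nonneg y)
        _ ≤ c := by
          rw [hc]
          have h1 : ‖s i • x‖ ≤ ‖x‖ := by
            rw [norm_smul, Real.norm_eq_abs, abs_of_nonneg (mem_Icc_of_mem_Δ hs i).1]
            nlinarith [norm_nonneg x, (mem_Icc_of_mem_Δ hs i).1,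
              (mem_Icc_of_mem_Δ hs i).2]
          have := Real.exp_le_exp.2 h1
          nlinarith [norm_nonneg y, Real.exp_pos ‖s i • x‖, Real.exp_pos ‖x‖]
  have h := norm_setIntegral_le_of_norm_le_const (μ := volume) (s := Δ n)
    ((isCompact_Δ n).measure_lt_top) hbound
  rw [measureReal_def, volume_Δ n] at h
  calc ‖FF z x y n‖ ≤ C * c ^ n * (1 / (n.factorial : ℝ)) := h
    _ = C * (c ^ n / (n.factorial : ℝ)) := by ring

end DuhamelAux

/-- **Duhamel perturbation series.**
`A` is a unital complex Banach algebra and `exp(x) = Σ_{n≥0} xⁿ/n!`.  For all `x, y ∈ A`,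
the family `(Iₙ)_{n≥0}` of Duhamel terms has sum `exp(x+y)`: the series `Σ_{n≥0} Iₙ`
converges in `A` to `exp(x+y)`.  (Applied with `x = −tD²` and `y = −t[D,ρ(·)]`, this is the
expansion of the heat operator `e^{−t𝐃²}` of the superconnection `𝐃` defining the JLO
cocycle.) -/
theorem duhamel_perturbation_series
    {A : Type*} [NormedRing A] [NormedAlgebra ℂ A] [CompleteSpace A] (x y : A) :
    HasSum (duhamelTerm x y) (NormedSpace.exp (x + y)) := by
  have hexp : (NormedSpace.exp : A → A) = NormedSpace.exp :=
    rfl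
  have hFF_eq : ∀ n, DuhamelAux.FF x x y n = duhamelTerm x y n := by
    intro n
    cases n with
    | zero => rw [DuhamelAux.FF_zero, hexp]; rfl
    | succ n =>
      show (∫ s in DuhamelAux.Δ (n + 1), NormedSpace.exp ((1 - ∑ i, s i) • x) *
        (List.ofFn fun i : Fin (n + 1) => y * NormedSpace.exp (s i • x)).prod) = _
      rw [hexp]
      rfl
  set z := x + y with hz
  have hpartial : ∀ n, ∑ k ∈ Finset.range n, duhamelTerm x y k =
      NormedSpace.exp z - DuhamelAux.FF z x y n := by
    intro n
    induction n with
    | zero => simp [DuhamelAux.FF_zero]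
    | succ n ih =>
      rw [Finset.sum_range_succ, ih, ← hFF_eq n, DuhamelAux.FF_step x y n]
      abel
  set M := ‖(1:A)‖ + 1 with hMdef
  set c := M * ‖y‖ * Real.exp ‖x‖ with hcdef
  have hsum : Summable (duhamelTerm x y) := by
    apply Summable.of_norm_bounded ((Real.summable_pow_div_factorial c).mul_left
      (M * Real.exp ‖x‖))
    intro n
    rw [← hFF_eq n]
    exact DuhamelAux.FF_norm_le x x y n
  have h1 : Filter.Tendsto (fun n => ∑ k ∈ Finset.range n, duhamelTerm x y k)
      Filter.atTop (nhds (∑' n, duhamelTerm x y n)) := hsum.hasSum.tendsto_sum_nat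
  have hz0 : Filter.Tendsto (fun n => DuhamelAux.FF z x y n) Filter.atTop (nhds 0) := by
    apply squeeze_zero_norm (fun n => DuhamelAux.FF_norm_le z x y n)
    exact ((Real.summable_pow_div_factorial c).mul_left
      (M * Real.exp ‖z‖)).tendsto_atTop_zero
  have h2 : Filter.Tendsto (fun n => NormedSpace.exp z - DuhamelAux.FF z x y n)
      Filter.atTop (nhds (NormedSpace.exp z)) := by
    simpa using tendsto_const_nhds.sub hz0
  have h3 : Filter.Tendsto (fun n => ∑ k ∈ Finset.range n, duhamelTerm x y k)
      Filter.atTop (nhds (NormedSpace.exp z)) := by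
    simp_rw [hpartial]; exact h2
  have htsum : (∑' n, duhamelTerm x y n) = NormedSpace.exp z :=
    tendsto_nhds_unique h1 h3
  have := hsum.hasSum
  rw [htsum, hexp] at this
  exact this
end
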